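/- Assume κ > −1 and set λ := √(1+κ). Then ker(h − λ·id) = { x + λ^{−1}·h(x) : x ∈ V, φ(x) = −x } and ker(h + λ·id) = { x − λ^{−1}·h(x) : x ∈ V, φ(x) = x }. -/

import Mathlib

theorem stmt_4
    {V : Type*} [AddCommGroup V] [Module ℝ V]
    (ξ : V) (η : V →ₗ[ℝ] ℝ) (φ h : V →ₗ[ℝ] V) (κ : ℝ)
    (hηξ : η ξ = 1)
    (hφ2 : ∀ v, φ (φ v) = v - η v • ξ)
    (hφξ : φ ξ = 0)
    (hηφ : ∀ v, η (φ v) = 0)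
    (hhξ : h ξ = 0)
    (hηh : ∀ v, η (h v) = 0)
    (hhφ : ∀ v, h (φ v) = - φ (h v))
    (hh2 : ∀ v, h (h v) = (1 + κ) • φ (φ v))
    (hκ : -1 < κ)
    (lam : ℝ) (hlam : lam = Real.sqrt (1 + κ)) :
    ((LinearMap.ker (h - lam • (LinearMap.id : V →ₗ[ℝ] V)) : Set V) =
      {v : V | ∃ x : V, φ x = -x ∧ v = x + lam⁻¹ • h x}) ∧
    ((LinearMap.ker (h + lam • (LinearMap.id : V →ₗ[ℝ] V)) : Set V) =
      {v : V | ∃ x : V, φ x = x ∧ v = x - lam⁻¹ • h x}) := by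
  have hκ' : (0:ℝ) < 1 + κ := by linarith
  have hlam0 : 0 < lam := by rw [hlam]; exact Real.sqrt_pos.mpr hκ'
  have hlamne : lam ≠ 0 := hlam0.ne'
  have hlam2 : lam * lam = 1 + κ := by
    rw [hlam]; exact Real.mul_self_sqrt hκ'.le
  have hξne : ∀ c : ℝ, c • ξ = 0 → c = 0 := by
    intro c hc
    have := congrArg η hc
    simpa [hηξ] using this
  constructor
  · ext v
    simp only [SetLike.mem_coe, LinearMap.mem_ker, LinearMap.sub_apply,
      LinearMap.smul_apply, LinearMap.id_apply, sub_eq_zero, Set.mem_setOf_eq]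
    constructor
    · intro hv
      have hηv : η v = 0 := by
        have h1 := hηh v
        rw [hv] at h1
        simpa [hlamne] using h1
      refine ⟨(2:ℝ)⁻¹ • (v - φ v), ?_, ?_⟩
      · rw [map_smul, map_sub, hφ2, hηv]
        module
      · have hφhv : φ (h v) = lam • φ v := by rw [hv, map_smul]
        rw [map_smul, map_sub, hhφ, hφhv, hv]
        match_scalars <;> field_simp <;> ring
    · rintro ⟨x, hx, rfl⟩
      have hηx : η x = 0 := by
        apply hξne
        have h1 := hφ2 x
        rw [hx, map_neg, hx, neg_neg] at h1
        linear_combination (norm := module) h1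
      have hhx : h (h x) = (lam * lam) • x := by
        rw [hh2, hφ2, hηx, ← hlam2]; module
      rw [map_add, map_smul, hhx]
      match_scalars <;> field_simp <;> ring
  · ext v
    simp only [SetLike.mem_coe, LinearMap.mem_ker, LinearMap.add_apply,
      LinearMap.smul_apply, LinearMap.id_apply, add_eq_zero_iff_eq_neg,
      Set.mem_setOf_eq]
    constructor
    · intro hv
      have hηv : η v = 0 := by
        have h1 := hηh v
        rw [hv] at h1
        simpa [hlamne] using h1
      refine ⟨(2:ℝ)⁻¹ • (v + φ v), ?_, ?_⟩
      · rw [map_smul, map_add, hφ2, hηv]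
        module
      · have hφhv : φ (h v) = -(lam • φ v) := by rw [hv, map_neg, map_smul]
        rw [map_smul, map_add, hhφ, hφhv, hv]
        match_scalars <;> field_simp <;> ring
    · rintro ⟨x, hx, rfl⟩
      have hηx : η x = 0 := by
        apply hξne
        have h1 := hφ2 x
        rw [hx, hx] at h1
        linear_combination (norm := module) h1
      have hhx : h (h x) = (lam * lam) • x := by
        rw [hh2, hφ2, hηx, ← hlam2]; module
      rw [map_sub, map_smul, hhx]
      match_scalars <;> field_simp <;> ring
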